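/- The special unitary group SU_{(1,1)}(Z[i]) = {g ∈ SL_2(Z[i]) : g* I_{1,-1} g = I_{1,-1}} is isomorphic to the subgroup of SL_2(Z) consisting of matrices (m_1 m_2; m_3 m_4) with m_1 ≡ m_4 mod 2 and m_2 ≡ m_3 mod 2, which has index 3 in SL_2(Z). An explicit isomorphism sends the matrix with rows (a+bi, c+di) and (c−di, a−bi) to the matrix with rows (a+c, d−b) and (d+b, a−c). -/

import Mathlib

open Matrix

/-- Membership in `SU_{(1,1)}(ℤ[i])`: a 2×2 complex matrix with Gaussian integer
entries, determinant 1, satisfying `g* I_{1,-1} g = I_{1,-1}`. -/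
def SU11Gauss (g : Matrix (Fin 2) (Fin 2) ℂ) : Prop :=
  (∀ i j, ∃ a b : ℤ, g i j = a + b * Complex.I) ∧ g.det = 1 ∧
    g.conjTranspose * !![(1 : ℂ), 0; 0, -1] * g = !![(1 : ℂ), 0; 0, -1]

namespace SU11Aux

local notation "conj'" => starRingEnd ℂ

def gm (a b c d : ℤ) : Matrix (Fin 2) (Fin 2) ℂ :=
  !![(a : ℂ) + b * Complex.I, (c : ℂ) + d * Complex.I;
     (c : ℂ) - d * Complex.I, (a : ℂ) - b * Complex.I]

lemma key (p q r s : ℂ) (h1 : conj' p * p - conj' r * r = 1)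
    (h2 : conj' p * q - conj' r * s = 0)
    (hdet : p * s - q * r = 1) : s = conj' p ∧ q = conj' r := by
  have hs : s = conj' p := by
    linear_combination (-s) * h1 + conj' p * hdet + r * h2
  subst hs
  refine ⟨rfl, ?_⟩
  by_cases hp : p = 0
  · subst hp
    simp only [map_zero, zero_mul, mul_zero] at h1 hdet ⊢
    have hr : r ≠ 0 := by intro h; rw [h] at h1; simp at h1
    have : r * (q - conj' r) = 0 := by linear_combination -hdet + h1
    rcases mul_eq_zero.mp this with h | h
    · exact absurd h hr
    · exact sub_eq_zero.mp h
  · have hcp : conj' p ≠ 0 := by simpa using hp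
    have : conj' p * (q - conj' r) = 0 := by linear_combination h2
    rcases mul_eq_zero.mp this with h | h
    · exact absurd h hcp
    · exact sub_eq_zero.mp h

lemma conj_int (a b : ℤ) : conj' ((a : ℂ) + b * Complex.I) = (a : ℂ) - b * Complex.I := by
  simp only [map_add, _root_.map_mul, Complex.conj_I, map_intCast]
  ring

lemma int_pair_eq {a b a' b' : ℤ} (h : (a : ℂ) + b * Complex.I = (a' : ℂ) + b' * Complex.I) :
    a = a' ∧ b = b' := by
  have h1 : ((a : ℝ) : ℂ) + (b:ℝ) * Complex.I = ((a' : ℝ):ℂ) + (b':ℝ) * Complex.I := by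
    push_cast at h ⊢; exact h
  rw [Complex.ext_iff] at h1
  simp [Complex.add_im, Complex.ofReal_re] at h1
  obtain ⟨h1, h2⟩ := h1
  exact ⟨by exact_mod_cast h1, by exact_mod_cast h2⟩

lemma su11_char (g : Matrix (Fin 2) (Fin 2) ℂ) :
    SU11Gauss g ↔ ∃ a b c d : ℤ, a^2 + b^2 - c^2 - d^2 = 1 ∧ g = gm a b c d := by
  constructor
  · rintro ⟨hent, hdet, huni⟩
    obtain ⟨a, b, hab⟩ := hent 0 0
    obtain ⟨c, d, hcd⟩ := hent 0 1
    obtain ⟨e, f, hef⟩ := hent 1 0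
    obtain ⟨u, v, huv⟩ := hent 1 1
    have hg : g = !![(a:ℂ) + b*Complex.I, (c:ℂ) + d*Complex.I;
                     (e:ℂ) + f*Complex.I, (u:ℂ) + v*Complex.I] := by
      rw [← hab, ← hcd, ← hef, ← huv]; exact (Matrix.eta_fin_two g)
    subst hg
    rw [Matrix.det_fin_two_of] at hdet
    have h00 := congrFun (congrFun huni 0) 0
    have h01 := congrFun (congrFun huni 0) 1
    simp [Matrix.mul_apply, Fin.sum_univ_succ, Matrix.conjTranspose_apply] at h00 h01
    set p := (a:ℂ) + b*Complex.I
    set q := (c:ℂ) + d*Complex.I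
    set r := (e:ℂ) + f*Complex.I
    set s' := (u:ℂ) + v*Complex.I
    have h1 : conj' p * p - conj' r * r = 1 := by
      rw [show conj' p = (a:ℂ) - b*Complex.I from conj_int a b,
        show conj' r = (e:ℂ) - f*Complex.I from conj_int e f]
      linear_combination h00
    have h2 : conj' p * q - conj' r * s' = 0 := by
      rw [show conj' p = (a:ℂ) - b*Complex.I from conj_int a b,
        show conj' r = (e:ℂ) - f*Complex.I from conj_int e f]
      linear_combination h01
    obtain ⟨hs, hq⟩ := key p q r s' h1 h2 hdet
    rw [conj_int a b] at hs
    rw [conj_int e f] at hq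
    have huv2 : u = a ∧ v = -b := by
      apply int_pair_eq
      push_cast
      linear_combination hs
    have hcd2 : c = e ∧ d = -f := by
      apply int_pair_eq
      push_cast
      linear_combination hq
    obtain ⟨rfl, rfl⟩ := huv2
    obtain ⟨rfl, rfl⟩ := hcd2
    refine ⟨u, b, c, -f, ?_, ?_⟩
    · have hdet' : ((u:ℂ) + b*Complex.I) * ((u:ℂ) + ((-b : ℤ):ℂ)*Complex.I)
          - ((c:ℂ) + ((-f : ℤ):ℂ)*Complex.I) * ((c:ℂ) + f*Complex.I) = 1 := hdet
      have hC : (u:ℂ)^2 + (b:ℂ)^2 - (c:ℂ)^2 - (f:ℂ)^2 = 1 := by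
        push_cast at hdet'
        linear_combination hdet' + ((b:ℂ)^2 - (f:ℂ)^2) * Complex.I_sq
      have : u^2 + b^2 - c^2 - f^2 = 1 := by exact_mod_cast hC
      linarith [sq_nonneg f, this, neg_sq f]
    · show !![p, q; r, s'] = gm u b c (-f)
      ext i j
      fin_cases i <;> fin_cases j <;> simp [gm, p, q, r, s'] <;> push_cast <;> ring
  · rintro ⟨a, b, c, d, hn, rfl⟩
    refine ⟨?_, ?_, ?_⟩
    · intro i j; fin_cases i <;> fin_cases j
      · exact ⟨a, b, by simp [gm]⟩
      · exact ⟨c, d, by simp [gm]⟩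
      · exact ⟨c, -d, by simp [gm]; ring⟩
      · exact ⟨a, -b, by simp [gm]; ring⟩
    · rw [gm, Matrix.det_fin_two_of]
      have h2 : (a:ℂ)^2 + (b:ℂ)^2 - (c:ℂ)^2 - (d:ℂ)^2 = 1 := by exact_mod_cast hn
      linear_combination h2 + ((d:ℂ)^2 - (b:ℂ)^2) * Complex.I_sq
    · ext i j
      fin_cases i <;> fin_cases j <;>
        simp [gm, Matrix.mul_apply, Fin.sum_univ_succ, Matrix.conjTranspose_apply,
          Complex.conj_I]
      · have h2 : (a:ℂ)^2 + (b:ℂ)^2 - (c:ℂ)^2 - (d:ℂ)^2 = 1 := by exact_mod_cast hn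
        linear_combination h2 + ((d:ℂ)^2 - (b:ℂ)^2) * Complex.I_sq
      · ring
      · ring
      · have h2 : (a:ℂ)^2 + (b:ℂ)^2 - (c:ℂ)^2 - (d:ℂ)^2 = 1 := by exact_mod_cast hn
        linear_combination -h2 + ((b:ℂ)^2 - (d:ℂ)^2) * Complex.I_sq

abbrev SL2Z := Matrix.SpecialLinearGroup (Fin 2) ℤ
abbrev SL2Z2 := Matrix.SpecialLinearGroup (Fin 2) (ZMod 2)

def Hsub : Subgroup SL2Z2 where
  carrier := {g | g.1 0 0 = g.1 1 1 ∧ g.1 0 1 = g.1 1 0}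
  one_mem' := by decide
  mul_mem' := by decide
  inv_mem' := by decide

instance : DecidablePred (· ∈ Hsub) := fun g =>
  decidable_of_iff (g.1 0 0 = g.1 1 1 ∧ g.1 0 1 = g.1 1 0) Iff.rfl

def pi2 : SL2Z →* SL2Z2 := Matrix.SpecialLinearGroup.map (Int.castRingHom (ZMod 2))

lemma pi2_apply (g : SL2Z) (i j : Fin 2) : (pi2 g).1 i j = ((g.1 i j : ℤ) : ZMod 2) := rfl

lemma pi2_surj : Function.Surjective pi2 := by
  intro y
  set v : Fin 2 → Fin 2 → ℤ := fun i j => (y.1 i j).val with hv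
  have hcast : ∀ i j, ((v i j : ℤ) : ZMod 2) = y.1 i j := by
    intro i j
    simp [hv, ZMod.natCast_val, ZMod.intCast_cast, ZMod.cast_id]
  have hb : ∀ i j, 0 ≤ v i j ∧ v i j ≤ 1 := by
    intro i j
    constructor
    · positivity
    · have h := (y.1 i j).val_lt
      have h' : ((y.1 i j).val : ℤ) < 2 := by exact_mod_cast h
      simp only [hv]
      omega
  have hdet : ((v 0 0 * v 1 1 - v 0 1 * v 1 0 : ℤ) : ZMod 2) = 1 := by
    push_cast
    rw [hcast, hcast, hcast, hcast]
    have := y.2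
    rw [Matrix.det_fin_two] at this
    exact this
  have hdet2 : (v 0 0 * v 1 1 - v 0 1 * v 1 0) % 2 = 1 % 2 := by
    have := (ZMod.intCast_eq_intCast_iff' (v 0 0 * v 1 1 - v 0 1 * v 1 0) 1 2).mp
      (by exact_mod_cast hdet)
    exact_mod_cast this
  have hp := hb 0 0; have hq := hb 1 1; have hr := hb 0 1; have hs := hb 1 0
  have h1 : 0 ≤ v 0 0 * v 1 1 ∧ v 0 0 * v 1 1 ≤ 1 := by
    constructor
    · exact mul_nonneg hp.1 hq.1
    · calc v 0 0 * v 1 1 ≤ 1 * 1 := by apply mul_le_mul hp.2 hq.2 hq.1; norm_num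
        _ = 1 := by ring
  have h2 : 0 ≤ v 0 1 * v 1 0 ∧ v 0 1 * v 1 0 ≤ 1 := by
    constructor
    · exact mul_nonneg hr.1 hs.1
    · calc v 0 1 * v 1 0 ≤ 1 * 1 := by apply mul_le_mul hr.2 hs.2 hs.1; norm_num
        _ = 1 := by ring
  rcases (by omega : v 0 0 * v 1 1 = 1 ∧ v 0 1 * v 1 0 = 0 ∨
      v 0 0 * v 1 1 = 0 ∧ v 0 1 * v 1 0 = 1) with ⟨e1, e2⟩ | ⟨e1, e2⟩
  · refine ⟨⟨!![v 0 0, v 0 1; v 1 0, v 1 1], by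
      rw [Matrix.det_fin_two_of]; omega⟩, ?_⟩
    ext i j
    refine (pi2_apply _ i j).trans ?_
    fin_cases i <;> fin_cases j
    · simpa using hcast 0 0
    · simpa using hcast 0 1
    · simpa using hcast 1 0
    · simpa using hcast 1 1
  · refine ⟨⟨!![v 0 0, -(v 0 1); v 1 0, v 1 1], by
      rw [Matrix.det_fin_two_of]; linear_combination e1 + e2⟩, ?_⟩
    have hneg : ((-(v 0 1) : ℤ) : ZMod 2) = y.1 0 1 := by
      push_cast
      rw [hcast 0 1]
      exact (by decide : ∀ x : ZMod 2, -x = x) _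
    ext i j
    refine (pi2_apply _ i j).trans ?_
    fin_cases i <;> fin_cases j
    · simpa using hcast 0 0
    · simpa using hneg
    · simpa using hcast 1 0
    · simpa using hcast 1 1

def Bsub : Subgroup SL2Z := Hsub.comap pi2

lemma Hsub_index : Hsub.index = 3 := by
  have hcard : Nat.card SL2Z2 = 6 := by
    rw [Nat.card_eq_fintype_card]; decide
  have hH : Nat.card Hsub = 2 := by
    rw [Nat.card_eq_fintype_card]; decide
  have h := Subgroup.index_mul_card (H := Hsub)
  rw [hcard, hH] at h
  omega

lemma Bsub_index : Bsub.index = 3 := by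
  rw [Bsub, Subgroup.index_comap_of_surjective _ pi2_surj, Hsub_index]

lemma Bsub_mem (g : SL2Z) : g ∈ Bsub ↔
    (g.1 0 0) % 2 = (g.1 1 1) % 2 ∧ (g.1 0 1) % 2 = (g.1 1 0) % 2 := by
  have h : g ∈ Bsub ↔ ((g.1 0 0 : ℤ) : ZMod 2) = ((g.1 1 1 : ℤ) : ZMod 2) ∧
      ((g.1 0 1 : ℤ) : ZMod 2) = ((g.1 1 0 : ℤ) : ZMod 2) := Iff.rfl
  rw [h, ZMod.intCast_eq_intCast_iff', ZMod.intCast_eq_intCast_iff']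
  norm_num

def FZ (a b c d : ℤ) : Matrix (Fin 2) (Fin 2) ℤ := !![a + c, d - b; d + b, a - c]

lemma FZ_det {a b c d : ℤ} (h : a^2 + b^2 - c^2 - d^2 = 1) : (FZ a b c d).det = 1 := by
  rw [FZ, Matrix.det_fin_two_of]
  linear_combination h

lemma gm_mul (a b c d a' b' c' d' : ℤ) :
    gm a b c d * gm a' b' c' d' =
      gm (a*a' - b*b' + c*c' + d*d') (a*b' + b*a' + d*c' - c*d')
         (a*c' - b*d' + c*a' + d*b') (a*d' + b*c' + d*a' - c*b') := by
  ext i j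
  fin_cases i <;> fin_cases j <;>
    simp [gm, Matrix.mul_apply, Fin.sum_univ_succ] <;>
    ring_nf <;> simp [Complex.I_sq] <;> ring_nf

lemma FZ_mul (a b c d a' b' c' d' : ℤ) :
    FZ (a*a' - b*b' + c*c' + d*d') (a*b' + b*a' + d*c' - c*d')
       (a*c' - b*d' + c*a' + d*b') (a*d' + b*c' + d*a' - c*b')
      = FZ a b c d * FZ a' b' c' d' := by
  ext i j
  fin_cases i <;> fin_cases j <;>
    simp [FZ, Matrix.mul_apply, Fin.sum_univ_succ] <;> ring

lemma gm_inj {a b c d a' b' c' d' : ℤ} (h : gm a b c d = gm a' b' c' d') :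
    a = a' ∧ b = b' ∧ c = c' ∧ d = d' := by
  have h00 : (a:ℂ) + b * Complex.I = (a':ℂ) + b' * Complex.I := congrFun (congrFun h 0) 0
  have h01 : (c:ℂ) + d * Complex.I = (c':ℂ) + d' * Complex.I := congrFun (congrFun h 0) 1
  obtain ⟨e1, e2⟩ := int_pair_eq h00
  obtain ⟨e3, e4⟩ := int_pair_eq h01
  exact ⟨e1, e2, e3, e4⟩

abbrev ST := {g : Matrix (Fin 2) (Fin 2) ℂ // SU11Gauss g}

lemma params_ex (x : ST) : ∃ p : ℤ × ℤ × ℤ × ℤ,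
    p.1^2 + p.2.1^2 - p.2.2.1^2 - p.2.2.2^2 = 1 ∧ x.1 = gm p.1 p.2.1 p.2.2.1 p.2.2.2 := by
  obtain ⟨a, b, c, d, h1, h2⟩ := (su11_char x.1).mp x.2
  exact ⟨(a, b, c, d), h1, h2⟩

noncomputable def params (x : ST) : ℤ × ℤ × ℤ × ℤ := (params_ex x).choose

lemma params_spec (x : ST) :
    (params x).1^2 + (params x).2.1^2 - (params x).2.2.1^2 - (params x).2.2.2^2 = 1 ∧
      x.1 = gm (params x).1 (params x).2.1 (params x).2.2.1 (params x).2.2.2 :=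
  (params_ex x).choose_spec

lemma FZ_mem {a b c d : ℤ} (h : (FZ a b c d).det = 1) :
    (⟨FZ a b c d, h⟩ : SL2Z) ∈ Bsub := by
  refine (Bsub_mem _).mpr ?_
  constructor
  · show (a + c) % 2 = (a - c) % 2
    omega
  · show (d - b) % 2 = (d + b) % 2
    omega

noncomputable def fm (x : ST) : Bsub :=
  ⟨⟨FZ (params x).1 (params x).2.1 (params x).2.2.1 (params x).2.2.2,
    FZ_det (params_spec x).1⟩, FZ_mem _⟩

end SU11Aux

open SU11Aux in
/-- `SU_{(1,1)}(ℤ[i])` is isomorphic to the subgroup of `SL_2(ℤ)` of matrices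
`(m₁ m₂; m₃ m₄)` with `m₁ ≡ m₄ mod 2` and `m₂ ≡ m₃ mod 2`, which has index 3 in
`SL_2(ℤ)`; an explicit isomorphism sends `((a+bi, c+di), (c−di, a−bi))` to
`((a+c, d−b), (d+b, a−c))`. -/
theorem su11_gauss_iso_index_three :
    ∃ B : Subgroup (Matrix.SpecialLinearGroup (Fin 2) ℤ),
      (∀ g : Matrix.SpecialLinearGroup (Fin 2) ℤ,
        g ∈ B ↔ ((g : Matrix (Fin 2) (Fin 2) ℤ) 0 0) % 2 =
                  ((g : Matrix (Fin 2) (Fin 2) ℤ) 1 1) % 2 ∧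
                ((g : Matrix (Fin 2) (Fin 2) ℤ) 0 1) % 2 =
                  ((g : Matrix (Fin 2) (Fin 2) ℤ) 1 0) % 2) ∧
      B.index = 3 ∧
      ∃ f : {g : Matrix (Fin 2) (Fin 2) ℂ // SU11Gauss g} → B,
        Function.Bijective f ∧
        (∀ x y : {g : Matrix (Fin 2) (Fin 2) ℂ // SU11Gauss g},
          ∃ hxy : SU11Gauss (x.1 * y.1), f ⟨x.1 * y.1, hxy⟩ = f x * f y) ∧
        (∀ (x : {g : Matrix (Fin 2) (Fin 2) ℂ // SU11Gauss g}) (a b c d : ℤ),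
          x.1 = !![(a : ℂ) + b * Complex.I, (c : ℂ) + d * Complex.I;
                   (c : ℂ) - d * Complex.I, (a : ℂ) - b * Complex.I] →
          ((f x : Matrix.SpecialLinearGroup (Fin 2) ℤ) : Matrix (Fin 2) (Fin 2) ℤ) =
            !![a + c, d - b; d + b, a - c]) := by
  refine ⟨Bsub, Bsub_mem, Bsub_index, fm, ⟨?_, ?_⟩, ?_, ?_⟩
  · -- injective
    intro x y hxy
    have h : FZ (params x).1 (params x).2.1 (params x).2.2.1 (params x).2.2.2 =
        FZ (params y).1 (params y).2.1 (params y).2.2.1 (params y).2.2.2 :=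
      congrArg (fun z : ↥Bsub => z.1.1) hxy
    have h00 := congrFun (congrFun h 0) 0
    have h01 := congrFun (congrFun h 0) 1
    have h10 := congrFun (congrFun h 1) 0
    have h11 := congrFun (congrFun h 1) 1
    simp [FZ] at h00 h01 h10 h11
    have hx := (params_spec x).2
    have hy := (params_spec y).2
    have e1 : (params x).1 = (params y).1 := by omega
    have e2 : (params x).2.1 = (params y).2.1 := by omega
    have e3 : (params x).2.2.1 = (params y).2.2.1 := by omega
    have e4 : (params x).2.2.2 = (params y).2.2.2 := by omega
    apply Subtype.ext
    rw [hx, hy, e1, e2, e3, e4]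
  · -- surjective
    rintro ⟨⟨m, hmdet⟩, hmB⟩
    replace hmB := (Bsub_mem _).mp hmB
    obtain ⟨hm1, hm2⟩ := hmB
    simp only at hm1 hm2
    obtain ⟨a, c, hac1, hac2⟩ : ∃ a c, m 0 0 = a + c ∧ m 1 1 = a - c :=
      ⟨(m 0 0 + m 1 1) / 2, (m 0 0 - m 1 1) / 2, by omega, by omega⟩
    obtain ⟨b, d, hbd1, hbd2⟩ : ∃ b d, m 0 1 = d - b ∧ m 1 0 = d + b :=
      ⟨(m 1 0 - m 0 1) / 2, (m 0 1 + m 1 0) / 2, by omega, by omega⟩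
    have hdet : m.det = 1 := hmdet
    rw [Matrix.det_fin_two, hac1, hac2, hbd1, hbd2] at hdet
    have hn : a^2 + b^2 - c^2 - d^2 = 1 := by linear_combination hdet
    have hg : SU11Gauss (gm a b c d) := (su11_char _).mpr ⟨a, b, c, d, hn, rfl⟩
    refine ⟨⟨gm a b c d, hg⟩, ?_⟩
    have hps := (params_spec ⟨gm a b c d, hg⟩).2
    obtain ⟨e1, e2, e3, e4⟩ := gm_inj hps.symm
    apply Subtype.ext
    apply Subtype.ext
    show FZ _ _ _ _ = m
    rw [e1, e2, e3, e4]
    rw [Matrix.eta_fin_two m, hac1, hac2, hbd1, hbd2]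
    rfl
  · -- multiplicative
    intro x y
    set px := params x with hpx
    set py := params y with hpy
    have hx := (params_spec x).2
    have hy := (params_spec y).2
    have hnx := (params_spec x).1
    have hny := (params_spec y).1
    have hprod : x.1 * y.1 = gm (px.1*py.1 - px.2.1*py.2.1 + px.2.2.1*py.2.2.1 + px.2.2.2*py.2.2.2)
        (px.1*py.2.1 + px.2.1*py.1 + px.2.2.2*py.2.2.1 - px.2.2.1*py.2.2.2)
        (px.1*py.2.2.1 - px.2.1*py.2.2.2 + px.2.2.1*py.1 + px.2.2.2*py.2.1)
        (px.1*py.2.2.2 + px.2.1*py.2.2.1 + px.2.2.2*py.1 - px.2.2.1*py.2.1) := by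
      rw [hx, hy, gm_mul]
    have hnprod : SU11Gauss (x.1 * y.1) :=
      (su11_char (x.1 * y.1)).mpr ⟨_, _, _, _, by nlinarith [hnx, hny], hprod⟩
    refine ⟨hnprod, ?_⟩
    have hps := (params_spec ⟨x.1 * y.1, hnprod⟩).2
    have heq := hps.symm.trans hprod
    obtain ⟨e1, e2, e3, e4⟩ := gm_inj heq
    apply Subtype.ext
    apply Subtype.ext
    show FZ _ _ _ _ = _
    rw [e1, e2, e3, e4, FZ_mul]
    rfl
  · -- formula
    intro x a b c d hx
    have hps := (params_spec x).2
    have heq : gm (params x).1 (params x).2.1 (params x).2.2.1 (params x).2.2.2 =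
        gm a b c d := hps.symm.trans hx
    obtain ⟨e1, e2, e3, e4⟩ := gm_inj heq
    show FZ _ _ _ _ = _
    rw [e1, e2, e3, e4]
    rfl
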